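/- (Orthogonal Procrustes, complex case) Let M ∈ ℂ^{n×r} with n ≥ r, and let M = L Σ R^H be a singular value decomposition with L ∈ ℂ^{n×r} having orthonormal columns, Σ diagonal with nonnegative entries, and R ∈ ℂ^{r×r} unitary. Then U* = L R^H maximizes Re tr(U M^H) over all U ∈ ℂ^{n×r} with U^H U = I_r. -/

import Mathlib

open Complex Matrix BigOperators Kronecker

noncomputable section

/-- DFT along the third mode, applied slice-wise. -/
def dft {n1 n2 n3 : ℕ} (X : Fin n3 → Matrix (Fin n1) (Fin n2) ℂ) :
    Fin n3 → Matrix (Fin n1) (Fin n2) ℂ :=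
  fun k => ∑ j : Fin n3,
    Complex.exp (-2 * (Real.pi : ℂ) * Complex.I * ((k : ℕ) : ℂ) * ((j : ℕ) : ℂ) / (n3 : ℂ)) • X j

/-- Block circulant matrix of a third-order tensor. -/
def bcirc {n1 n2 n3 : ℕ} (X : Fin n3 → Matrix (Fin n1) (Fin n2) ℂ) :
    Matrix (Fin n3 × Fin n1) (Fin n3 × Fin n2) ℂ :=
  Matrix.of fun p q => X (p.1 - q.1) p.2 q.2

/-- Vertical stacking of the frontal slices. -/
def bvec {n2 n4 n3 : ℕ} (Y : Fin n3 → Matrix (Fin n2) (Fin n4) ℂ) :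
    Matrix (Fin n3 × Fin n2) (Fin n4) ℂ :=
  Matrix.of fun p c => Y p.1 p.2 c

/-- t-product of third-order tensors, defined via bvfold(bcirc(X)·bvec(Y)). -/
def tMul {n1 n2 n4 n3 : ℕ} (X : Fin n3 → Matrix (Fin n1) (Fin n2) ℂ)
    (Y : Fin n3 → Matrix (Fin n2) (Fin n4) ℂ) :
    Fin n3 → Matrix (Fin n1) (Fin n4) ℂ :=
  fun k => Matrix.of fun a c => (bcirc X * bvec Y) (k, a) c

/-- Tensor conjugate transpose: conjugate-transpose each frontal slice and
reverse the order of slices 2 through n3. -/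
def tH {n1 n2 n3 : ℕ} (X : Fin n3 → Matrix (Fin n1) (Fin n2) ℂ) :
    Fin n3 → Matrix (Fin n2) (Fin n1) ℂ :=
  fun k => (X (-k))ᴴ

/-- Identity tensor: first frontal slice the identity matrix, others zero. -/
def tId (n1 n3 : ℕ) : Fin n3 → Matrix (Fin n1) (Fin n1) ℂ :=
  fun k => if (k : ℕ) = 0 then 1 else 0

/-- Frobenius norm of a third-order tensor. -/
def fro {n1 n2 n3 : ℕ} (X : Fin n3 → Matrix (Fin n1) (Fin n2) ℂ) : ℝ :=
  Real.sqrt (∑ k, ∑ i, ∑ j, ‖X k i j‖ ^ 2)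

/-- Squared Frobenius norm of a matrix. -/
def mFrobSq {m n : ℕ} (A : Matrix (Fin m) (Fin n) ℂ) : ℝ :=
  ∑ i, ∑ j, ‖A i j‖ ^ 2

/-- Tubal rank: maximal rank of the Fourier-domain frontal slices. -/
def tubalRank {n1 n2 n3 : ℕ} (X : Fin n3 → Matrix (Fin n1) (Fin n2) ℂ) : ℕ :=
  Finset.univ.sup fun k => (dft X k).rank

/-- Mode-1 matricization. -/
def mode1 {n1 n2 n3 : ℕ} (X : Fin n3 → Matrix (Fin n1) (Fin n2) ℂ) :
    Matrix (Fin n1) (Fin n2 × Fin n3) ℂ :=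
  Matrix.of fun i p => X p.2 i p.1

/-- Mode-2 matricization. -/
def mode2 {n1 n2 n3 : ℕ} (X : Fin n3 → Matrix (Fin n1) (Fin n2) ℂ) :
    Matrix (Fin n2) (Fin n1 × Fin n3) ℂ :=
  Matrix.of fun j p => X p.2 p.1 j

/-- The n×n discrete Fourier matrix. -/
def dftMatrix (n : ℕ) : Matrix (Fin n) (Fin n) ℂ :=
  Matrix.of fun j k =>
    Complex.exp (-2 * (Real.pi : ℂ) * Complex.I * ((j : ℕ) : ℂ) * ((k : ℕ) : ℂ) / (n : ℂ))


lemma cs_re_le_one {n : ℕ} (a b : Fin n → ℂ)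
    (ha : ∑ k, ‖a k‖ ^ 2 = 1) (hb : ∑ k, ‖b k‖ ^ 2 = 1) :
    (∑ k, (starRingEnd ℂ) (a k) * b k).re ≤ 1 := by
  let x : EuclideanSpace ℂ (Fin n) := WithLp.toLp 2 a
  let y : EuclideanSpace ℂ (Fin n) := WithLp.toLp 2 b
  have hinner : (inner ℂ x y : ℂ) = ∑ k, (starRingEnd ℂ) (a k) * b k := by
    simp [PiLp.inner_apply, x, y, mul_comm]
  have hx : ‖x‖ = 1 := by
    rw [EuclideanSpace.norm_eq]
    have : ∑ k, ‖x k‖ ^ 2 = 1 := by simpa [x] using ha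
    rw [this, Real.sqrt_one]
  have hy : ‖y‖ = 1 := by
    rw [EuclideanSpace.norm_eq]
    have : ∑ k, ‖y k‖ ^ 2 = 1 := by simpa [y] using hb
    rw [this, Real.sqrt_one]
  calc (∑ k, (starRingEnd ℂ) (a k) * b k).re = (inner ℂ x y : ℂ).re := by rw [hinner]
    _ ≤ ‖(inner ℂ x y : ℂ)‖ := Complex.re_le_norm _
    _ ≤ ‖x‖ * ‖y‖ := norm_inner_le_norm x y
    _ = 1 := by rw [hx, hy, one_mul]


theorem orthogonal_procrustes {n r : ℕ} (hnr : r ≤ n)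
    (M L : Matrix (Fin n) (Fin r) ℂ) (sigma : Fin r → ℝ) (R : Matrix (Fin r) (Fin r) ℂ)
    (hL : Lᴴ * L = 1) (hsigma : ∀ i, 0 ≤ sigma i)
    (hR : Rᴴ * R = 1) (hRR : R * Rᴴ = 1)
    (hM : M = L * Matrix.diagonal (fun i => ((sigma i : ℝ) : ℂ)) * Rᴴ) :
    ∀ U : Matrix (Fin n) (Fin r) ℂ, Uᴴ * U = 1 →
      ((U * Mᴴ).trace).re ≤ (((L * Rᴴ) * Mᴴ).trace).re := by
  intro U hU
  set D : Matrix (Fin r) (Fin r) ℂ := Matrix.diagonal (fun i => ((sigma i : ℝ) : ℂ)) with hD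
  have hMH : Mᴴ = R * D * Lᴴ := by
    have hstar : (star fun i => ((sigma i : ℝ) : ℂ)) = fun i => ((sigma i : ℝ) : ℂ) := by
      funext i; simp [Complex.star_def, Complex.conj_ofReal]
    rw [hM]
    simp [Matrix.conjTranspose_mul, Matrix.diagonal_conjTranspose, hD, Matrix.mul_assoc, hstar]
  -- trace formula
  have key : ∀ V : Matrix (Fin n) (Fin r) ℂ,
      (V * Mᴴ).trace = ∑ i, (Lᴴ * V * R) i i * ((sigma i : ℝ) : ℂ) := by
    intro V
    have : V * Mᴴ = V * (R * D * Lᴴ) := by rw [hMH]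
    rw [this]
    have : V * (R * D * Lᴴ) = (V * R * D) * Lᴴ := by
      simp [Matrix.mul_assoc]
    rw [this, Matrix.trace_mul_comm, ← Matrix.mul_assoc, ← Matrix.mul_assoc]
    rw [Matrix.trace]
    congr 1
    ext i
    simp [Matrix.diag, hD, Matrix.mul_diagonal]
  -- diagonal entries bounded by 1
  have hdiag : ∀ i, ((Lᴴ * U * R) i i).re ≤ 1 := by
    intro i
    have hUR : (U * R)ᴴ * (U * R) = 1 := by
      rw [Matrix.conjTranspose_mul, Matrix.mul_assoc, ← Matrix.mul_assoc Uᴴ U R, hU,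
        Matrix.one_mul, hR]
    have hcol : ∀ (A : Matrix (Fin n) (Fin r) ℂ), Aᴴ * A = 1 →
        ∑ k, ‖A k i‖ ^ 2 = 1 := by
      intro A hA
      have h1 : (Aᴴ * A) i i = 1 := by rw [hA]; simp
      have h2 : (Aᴴ * A) i i = ∑ k, (starRingEnd ℂ) (A k i) * A k i := by
        simp [Matrix.mul_apply, Matrix.conjTranspose_apply]
      have h3 : ∑ k, ((starRingEnd ℂ) (A k i) * A k i).re = 1 := by
        have := congrArg Complex.re (h2 ▸ h1)
        simpa [Complex.re_sum] using this
      rw [← h3]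
      congr 1
      ext k
      rw [← Complex.normSq_eq_norm_sq, ← Complex.normSq_eq_conj_mul_self, Complex.ofReal_re]
    have hWeq : (Lᴴ * U * R) i i = ∑ k, (starRingEnd ℂ) (L k i) * (U * R) k i := by
      rw [Matrix.mul_assoc]
      simp [Matrix.mul_apply, Matrix.conjTranspose_apply]
    rw [hWeq]
    exact cs_re_le_one _ _ (hcol L hL) (hcol (U * R) hUR)
  -- RHS value
  have hWstar : Lᴴ * (L * Rᴴ) * R = 1 := by
    rw [← Matrix.mul_assoc, hL, Matrix.one_mul, hR]
  rw [key U, key (L * Rᴴ), hWstar]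
  have hre : ∀ W : Matrix (Fin r) (Fin r) ℂ,
      (∑ i, W i i * ((sigma i : ℝ) : ℂ)).re = ∑ i, (W i i).re * sigma i := by
    intro W
    rw [Complex.re_sum]
    congr 1; ext i
    simp [Complex.mul_re]
  rw [hre, hre]
  have h1 : ∀ i : Fin r, ((1 : Matrix (Fin r) (Fin r) ℂ) i i).re = 1 := by
    intro i; simp
  apply Finset.sum_le_sum
  intro i _
  rw [h1 i, one_mul]
  exact mul_le_of_le_one_left (hsigma i) (hdiag i)
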